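/- Let G₁ be an r₁-regular graph on n₁ vertices and m₁ edges, and G₂ an r₂-regular graph on n₂ vertices, and let α ∈ [0,1]. (1) If r₁ = 1, then the A_α-spectrum of the R-vertex join G₁⟨v⟩G₂ consists precisely of: α(3+n₂) − 1; the values 2α + λ_i(A_α(G₂)) for i = 2,…,n₂; and the three roots of F(x) = (x−2α−r₂)(x² − (3α+αn₂+1)x + 2α²n₂ + 6α − 2) − 2n₂(1−α)²(x−2α). (2) If r₁ ≥ 2, then the A_α-spectrum of G₁⟨v⟩G₂ consists precisely of: 2α repeated m₁−n₁ times; αn₁ + λ_i(A_α(G₂)) for i = 2,…,n₂; the two roots of G_i(x) = x² − (2α+αr₁+αn₂+λ_i(A_α(G₁)))x + 2α²n₂ + 3αr₁ − r₁ + (3α−1)λ_i(A_α(G₁)) for each i = 2,…,n₁; and the three roots of F(x) = (x−αn₁−r₂)(x² − (2α+αr₁+αn₂+r₁)x + (2α²n₂+6αr₁−2r₁)) − n₁n₂(1−α)²(x−2α). -/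

import Mathlib

open Matrix Polynomial
open scoped Classical

noncomputable section

/-- `A_α(G) = α·D(G) + (1-α)·A(G)`, where `D(G)` is the diagonal degree matrix and
`A(G)` the adjacency matrix. -/
def Aalpha {V : Type*} [Fintype V] (G : SimpleGraph V) (α : ℝ) : Matrix V V ℝ :=
  α • Matrix.diagonal (fun v => (G.degree v : ℝ)) + (1 - α) • G.adjMatrix ℝ

/-- The `R`-vertex join `G₁⟨v⟩G₂`: take the `R`-graph `R(G₁)` (for each edge of `G₁` a
new vertex joined to both of its endpoints) together with `G₂`, and join every original
vertex of `G₁` with every vertex of `G₂`. -/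
def rVertexJoin {V₁ V₂ : Type*} (G₁ : SimpleGraph V₁) (G₂ : SimpleGraph V₂) :
    SimpleGraph (V₁ ⊕ (↥G₁.edgeSet ⊕ V₂)) :=
  SimpleGraph.fromRel fun a b =>
    match a, b with
    | Sum.inl v, Sum.inl w => G₁.Adj v w
    | Sum.inl v, Sum.inr (Sum.inl e) => v ∈ (e : Sym2 V₁)
    | Sum.inl _, Sum.inr (Sum.inr _) => True
    | Sum.inr (Sum.inr u), Sum.inr (Sum.inr w) => G₂.Adj u w
    | _, _ => False

lemma eval_charpoly' {n : Type*} [Fintype n] [DecidableEq n] (M : Matrix n n ℝ) (x : ℝ) :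
    (M.charpoly).eval x = (x • (1 : Matrix n n ℝ) - M).det := by
  rw [Matrix.charpoly, ← Polynomial.coe_evalRingHom, RingHom.map_det]
  congr 1
  ext i j
  by_cases h : i = j <;>
    simp [h, Matrix.charmatrix_apply, Matrix.one_apply, Matrix.diagonal_apply]

lemma det_aux {n : ℕ} (M : Matrix (Fin n) (Fin n) ℝ) (μ : Fin n → ℝ)
    (h : ∀ y : ℝ, (y • (1 : Matrix (Fin n) (Fin n) ℝ) - M).det = ∏ i, (y - μ i))
    (u w : ℝ) : (u • (1 : Matrix (Fin n) (Fin n) ℝ) + w • M).det = ∏ i, (u + w * μ i) := by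
  rcases eq_or_ne w 0 with hw | hw
  · simp [hw, Matrix.det_smul]
  · have e : u • (1 : Matrix (Fin n) (Fin n) ℝ) + w • M
        = (-w) • (((-u/w)) • (1 : Matrix (Fin n) (Fin n) ℝ) - M) := by
      rw [smul_sub, smul_smul]
      field_simp
      rw [neg_smul, sub_neg_eq_add]
    rw [e, Matrix.det_smul, h, Fintype.card_fin]
    rw [show ((-w)^n : ℝ) = ∏ _i : Fin n, (-w) by simp, ← Finset.prod_mul_distrib]
    refine Finset.prod_congr rfl fun i _ => ?_
    field_simp
    ring

lemma Aalpha_mulVec_ones {n r : ℕ} (G : SimpleGraph (Fin n)) (hreg : G.IsRegularOfDegree r)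
    (α : ℝ) : Aalpha G α *ᵥ (fun _ => (1:ℝ)) = fun _ => (r : ℝ) := by
  funext v
  simp [Aalpha, Matrix.add_mulVec, Matrix.smul_mulVec, Matrix.mulVec_diagonal,
    SimpleGraph.adjMatrix_mulVec_const_apply_of_regular hreg, hreg v]
  ring

lemma root_le_r {n r : ℕ} (G : SimpleGraph (Fin n)) (hreg : G.IsRegularOfDegree r)
    {α : ℝ} (hα : α ∈ Set.Icc (0:ℝ) 1) {t : ℝ}
    (ht : (t • (1 : Matrix (Fin n) (Fin n) ℝ) - Aalpha G α).det = 0) : t ≤ r := by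
  obtain ⟨v, hv0, hv⟩ := (Matrix.exists_mulVec_eq_zero_iff).mpr ht
  obtain ⟨j, hj⟩ := Function.ne_iff.mp hv0
  have hj : v j ≠ 0 := hj
  have hne : (Finset.univ : Finset (Fin n)).Nonempty := ⟨j, Finset.mem_univ j⟩
  obtain ⟨i₀, -, hmax⟩ := Finset.exists_max_image Finset.univ (fun i => |v i|) hne
  have hpos : 0 < |v i₀| := lt_of_lt_of_le (abs_pos.mpr hj) (hmax j (Finset.mem_univ j))
  have heq : t * v i₀ - (α * r) * v i₀ = (1 - α) * ∑ u ∈ G.neighborFinset i₀, v u := by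
    have h0 := congrFun hv i₀
    simp only [Matrix.sub_mulVec, Matrix.smul_mulVec, Pi.sub_apply, Pi.smul_apply,
      Matrix.one_mulVec, smul_eq_mul, Pi.zero_apply, Aalpha, Matrix.add_mulVec,
      Matrix.mulVec_diagonal, Pi.add_apply, SimpleGraph.adjMatrix_mulVec_apply, hreg i₀] at h0
    linarith [h0]
  have hsum : |∑ u ∈ G.neighborFinset i₀, v u| ≤ (r : ℝ) * |v i₀| := by
    calc |∑ u ∈ G.neighborFinset i₀, v u|
        ≤ ∑ u ∈ G.neighborFinset i₀, |v u| := Finset.abs_sum_le_sum_abs _ _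
      _ ≤ ∑ _u ∈ G.neighborFinset i₀, |v i₀| :=
          Finset.sum_le_sum fun u _ => hmax u (Finset.mem_univ u)
      _ = (r : ℝ) * |v i₀| := by
          rw [Finset.sum_const, G.card_neighborFinset_eq_degree, hreg i₀, nsmul_eq_mul]
  have h1 : |t - α * r| * |v i₀| ≤ (1 - α) * ((r:ℝ) * |v i₀|) := by
    have h3 : |t - α * r| * |v i₀| = |1 - α| * |∑ u ∈ G.neighborFinset i₀, v u| := by
      rw [← abs_mul, ← abs_mul, sub_mul, heq]
    rw [h3, abs_of_nonneg (by linarith [hα.2] : (0:ℝ) ≤ 1 - α)]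
    exact mul_le_mul_of_nonneg_left hsum (by linarith [hα.2])
  have h2 : |t - α * r| ≤ (1 - α) * r := le_of_mul_le_mul_right (by linarith [h1]) hpos
  have h4 := (abs_le.mp h2).2
  nlinarith [hα.1, hα.2, Nat.cast_nonneg (α := ℝ) r]

lemma mu_zero_eq_r {n r : ℕ} (G : SimpleGraph (Fin n)) (hn : 0 < n)
    (hreg : G.IsRegularOfDegree r) {α : ℝ} (hα : α ∈ Set.Icc (0:ℝ) 1)
    (μ : Fin n → ℝ) (hμ : Antitone μ)
    (hch : (Aalpha G α).charpoly = ∏ i, (X - C (μ i))) :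
    μ ⟨0, hn⟩ = (r : ℝ) := by
  have heval : ∀ y : ℝ, (y • (1 : Matrix (Fin n) (Fin n) ℝ) - Aalpha G α).det
      = ∏ i, (y - μ i) := by
    intro y
    have h5 := congrArg (Polynomial.eval y) hch
    rw [eval_charpoly'] at h5
    rw [h5, Polynomial.eval_prod]
    simp
  have hr : ((r:ℝ) • (1 : Matrix (Fin n) (Fin n) ℝ) - Aalpha G α).det = 0 := by
    apply Matrix.exists_mulVec_eq_zero_iff.mp
    refine ⟨fun _ => 1, ?_, ?_⟩
    · intro h; exact one_ne_zero (congrFun h ⟨0, hn⟩)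
    · rw [Matrix.sub_mulVec, Aalpha_mulVec_ones G hreg, Matrix.smul_mulVec,
        Matrix.one_mulVec]
      funext i; simp
  have hex : ∃ j, μ j = (r : ℝ) := by
    rw [heval] at hr
    obtain ⟨j, -, hj⟩ := Finset.prod_eq_zero_iff.mp hr
    exact ⟨j, by linarith [sub_eq_zero.mp hj]⟩
  obtain ⟨j, hj⟩ := hex
  have hle : μ ⟨0, hn⟩ ≤ (r : ℝ) := by
    apply root_le_r G hreg hα
    rw [heval]
    exact Finset.prod_eq_zero (Finset.mem_univ ⟨0, hn⟩) (by simp)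
  have hge : (r : ℝ) ≤ μ ⟨0, hn⟩ := hj ▸ hμ (show (⟨0,hn⟩ : Fin n) ≤ j by simp [Fin.le_def])
  linarith

section Adj
variable {V₁ V₂ : Type*} (G₁ : SimpleGraph V₁) (G₂ : SimpleGraph V₂)

lemma rvj_adj_ll (v w : V₁) : (rVertexJoin G₁ G₂).Adj (Sum.inl v) (Sum.inl w) ↔ G₁.Adj v w := by
  simp only [rVertexJoin, SimpleGraph.fromRel_adj]
  constructor
  · rintro ⟨-, h | h⟩; exact h; exact h.symm
  · intro h; exact ⟨by simpa using h.ne, Or.inl h⟩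

lemma rvj_adj_le (v : V₁) (e : G₁.edgeSet) :
    (rVertexJoin G₁ G₂).Adj (Sum.inl v) (Sum.inr (Sum.inl e)) ↔ v ∈ (e : Sym2 V₁) := by
  simp only [rVertexJoin, SimpleGraph.fromRel_adj]
  constructor
  · rintro ⟨-, h | h⟩; exact h; exact h.elim
  · intro h; exact ⟨by simp, Or.inl h⟩

lemma rvj_adj_lr (v : V₁) (u : V₂) :
    (rVertexJoin G₁ G₂).Adj (Sum.inl v) (Sum.inr (Sum.inr u)) := by
  simp only [rVertexJoin, SimpleGraph.fromRel_adj]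
  exact ⟨by simp, Or.inl trivial⟩

lemma rvj_adj_ee (e f : G₁.edgeSet) :
    ¬ (rVertexJoin G₁ G₂).Adj (Sum.inr (Sum.inl e)) (Sum.inr (Sum.inl f)) := by
  simp only [rVertexJoin, SimpleGraph.fromRel_adj]
  rintro ⟨-, h | h⟩ <;> exact h

lemma rvj_adj_er (e : G₁.edgeSet) (u : V₂) :
    ¬ (rVertexJoin G₁ G₂).Adj (Sum.inr (Sum.inl e)) (Sum.inr (Sum.inr u)) := by
  simp only [rVertexJoin, SimpleGraph.fromRel_adj]
  rintro ⟨-, h | h⟩ <;> exact h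

lemma rvj_adj_rr (u w : V₂) :
    (rVertexJoin G₁ G₂).Adj (Sum.inr (Sum.inr u)) (Sum.inr (Sum.inr w)) ↔ G₂.Adj u w := by
  simp only [rVertexJoin, SimpleGraph.fromRel_adj]
  constructor
  · rintro ⟨-, h | h⟩; exact h; exact h.symm
  · intro h; exact ⟨by simpa using h.ne, Or.inl h⟩

end Adj

lemma degree_eq_sum {V : Type*} [Fintype V] (G : SimpleGraph V) (v : V) :
    (G.degree v : ℝ) = ∑ u, if G.Adj v u then (1:ℝ) else 0 := by
  rw [Finset.sum_boole, ← SimpleGraph.neighborFinset_eq_filter,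
    SimpleGraph.card_neighborFinset_eq_degree]

section Counting
variable {n₁ : ℕ} (G₁ : SimpleGraph (Fin n₁))

lemma sum_incidence (v : Fin n₁) :
    ∑ e : G₁.edgeSet, (if v ∈ (e : Sym2 (Fin n₁)) then (1:ℝ) else 0) = G₁.degree v := by
  rw [Finset.sum_boole]
  norm_cast
  rw [← Fintype.card_subtype, ← SimpleGraph.card_incidenceSet_eq_degree]
  apply Fintype.card_congr
  exact (Equiv.subtypeSubtypeEquivSubtypeInter (· ∈ G₁.edgeSet) (v ∈ ·)).trans
    (Equiv.subtypeEquivRight fun e => by simp [SimpleGraph.incidenceSet, and_comm])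

lemma sum_incidence_pair {v w : Fin n₁} (hvw : v ≠ w) :
    ∑ e : G₁.edgeSet, (if v ∈ (e : Sym2 (Fin n₁)) then (1:ℝ) else 0) *
      (if w ∈ (e : Sym2 (Fin n₁)) then (1:ℝ) else 0)
    = if G₁.Adj v w then (1:ℝ) else 0 := by
  have key : ∀ e : G₁.edgeSet, (if v ∈ (e : Sym2 (Fin n₁)) then (1:ℝ) else 0) *
      (if w ∈ (e : Sym2 (Fin n₁)) then (1:ℝ) else 0)
      = if (e : Sym2 (Fin n₁)) = s(v, w) then (1:ℝ) else 0 := by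
    intro e
    by_cases h : (e : Sym2 (Fin n₁)) = s(v, w)
    · simp [h]
    · rcases Classical.em (v ∈ (e : Sym2 (Fin n₁))) with h1 | h1 <;>
      rcases Classical.em (w ∈ (e : Sym2 (Fin n₁))) with h2 | h2 <;>
        simp [h1, h2, h]
      exact h ((Sym2.mem_and_mem_iff hvw).mp ⟨h1, h2⟩)
  rw [Finset.sum_congr rfl fun e _ => key e, Finset.sum_boole]
  by_cases hadj : G₁.Adj v w
  · rw [if_pos hadj]
    norm_cast
    rw [Finset.card_eq_one]
    refine ⟨⟨s(v,w), hadj⟩, ?_⟩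
    ext e
    simp only [Finset.mem_filter, Finset.mem_univ, true_and, Finset.mem_singleton]
    exact ⟨fun h => Subtype.ext h, fun h => by rw [h]⟩
  · rw [if_neg hadj]
    norm_cast
    rw [Finset.card_eq_zero]
    ext e
    simp only [Finset.mem_filter, Finset.mem_univ, true_and, Finset.notMem_empty, iff_false]
    intro h
    have := e.2
    rw [h] at this
    exact hadj this

lemma sum_mem_eq_two {e : Sym2 (Fin n₁)} (he : e ∈ G₁.edgeSet) :
    ∑ v : Fin n₁, (if v ∈ e then (1:ℝ) else 0) = 2 := by
  induction e using Sym2.ind with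
  | _ a b =>
    have hab : a ≠ b := G₁.ne_of_adj he
    rw [Finset.sum_boole]
    have : Finset.univ.filter (fun v => v ∈ s(a, b)) = {a, b} := by
      ext v; simp [Sym2.mem_iff]
    rw [this, Finset.card_insert_of_notMem (by simp [hab]), Finset.card_singleton]
    norm_num
end Counting

section Degrees
variable {n₁ n₂ r₁ r₂ : ℕ} (G₁ : SimpleGraph (Fin n₁)) (G₂ : SimpleGraph (Fin n₂))
  (hreg₁ : G₁.IsRegularOfDegree r₁) (hreg₂ : G₂.IsRegularOfDegree r₂)

lemma rvj_degree_inl (hreg₁ : G₁.IsRegularOfDegree r₁) (v : Fin n₁) :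
    ((rVertexJoin G₁ G₂).degree (Sum.inl v) : ℝ) = 2 * r₁ + n₂ := by
  rw [degree_eq_sum, Fintype.sum_sum_type, Fintype.sum_sum_type]
  have h1 : ∑ w : Fin n₁, (if (rVertexJoin G₁ G₂).Adj (Sum.inl v) (Sum.inl w) then (1:ℝ) else 0)
      = r₁ := by
    simp only [rvj_adj_ll]
    rw [← degree_eq_sum, hreg₁ v]
  have h2 : ∑ e : G₁.edgeSet,
      (if (rVertexJoin G₁ G₂).Adj (Sum.inl v) (Sum.inr (Sum.inl e)) then (1:ℝ) else 0) = r₁ := by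
    simp only [rvj_adj_le]
    rw [sum_incidence, hreg₁ v]
  have h3 : ∑ u : Fin n₂,
      (if (rVertexJoin G₁ G₂).Adj (Sum.inl v) (Sum.inr (Sum.inr u)) then (1:ℝ) else 0) = n₂ := by
    simp only [rvj_adj_lr, if_true]
    simp
  rw [h1, h2, h3]; ring

lemma rvj_degree_edge (e : G₁.edgeSet) :
    ((rVertexJoin G₁ G₂).degree (Sum.inr (Sum.inl e)) : ℝ) = 2 := by
  rw [degree_eq_sum, Fintype.sum_sum_type, Fintype.sum_sum_type]
  have h1 : ∑ w : Fin n₁,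
      (if (rVertexJoin G₁ G₂).Adj (Sum.inr (Sum.inl e)) (Sum.inl w) then (1:ℝ) else 0) = 2 := by
    have : ∀ w, (rVertexJoin G₁ G₂).Adj (Sum.inr (Sum.inl e)) (Sum.inl w)
        ↔ w ∈ (e : Sym2 (Fin n₁)) := fun w => (rVertexJoin G₁ G₂).adj_comm _ _ |>.trans
      (rvj_adj_le G₁ G₂ w e)
    simp only [this]
    exact sum_mem_eq_two G₁ e.2
  have h2 : ∑ f : G₁.edgeSet,
      (if (rVertexJoin G₁ G₂).Adj (Sum.inr (Sum.inl e)) (Sum.inr (Sum.inl f)) then (1:ℝ) else 0)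
      = 0 := by
    simp only [rvj_adj_ee, if_false]
    simp
  have h3 : ∑ u : Fin n₂,
      (if (rVertexJoin G₁ G₂).Adj (Sum.inr (Sum.inl e)) (Sum.inr (Sum.inr u)) then (1:ℝ) else 0)
      = 0 := by
    simp only [rvj_adj_er, if_false]
    simp
  rw [h1, h2, h3]; ring

lemma rvj_degree_inr (hreg₂ : G₂.IsRegularOfDegree r₂) (u : Fin n₂) :
    ((rVertexJoin G₁ G₂).degree (Sum.inr (Sum.inr u)) : ℝ) = r₂ + n₁ := by
  rw [degree_eq_sum, Fintype.sum_sum_type, Fintype.sum_sum_type]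
  have h1 : ∑ w : Fin n₁,
      (if (rVertexJoin G₁ G₂).Adj (Sum.inr (Sum.inr u)) (Sum.inl w) then (1:ℝ) else 0) = n₁ := by
    have : ∀ w, (rVertexJoin G₁ G₂).Adj (Sum.inr (Sum.inr u)) (Sum.inl w) :=
      fun w => ((rVertexJoin G₁ G₂).adj_comm _ _).mp (rvj_adj_lr G₁ G₂ w u)
    simp only [this, if_true]
    simp
  have h2 : ∑ f : G₁.edgeSet,
      (if (rVertexJoin G₁ G₂).Adj (Sum.inr (Sum.inr u)) (Sum.inr (Sum.inl f)) then (1:ℝ) else 0)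
      = 0 := by
    have : ∀ f : G₁.edgeSet, ¬ (rVertexJoin G₁ G₂).Adj (Sum.inr (Sum.inr u)) (Sum.inr (Sum.inl f)) :=
      fun f h => rvj_adj_er G₁ G₂ f u (h.symm)
    simp only [this, if_false]
    simp
  have h3 : ∑ w : Fin n₂,
      (if (rVertexJoin G₁ G₂).Adj (Sum.inr (Sum.inr u)) (Sum.inr (Sum.inr w)) then (1:ℝ) else 0)
      = r₂ := by
    simp only [rvj_adj_rr]
    rw [← degree_eq_sum, hreg₂ u]
  rw [h1, h2, h3]; ring

end Degrees

lemma Aalpha_apply {V : Type*} [Fintype V] (G : SimpleGraph V) (α : ℝ) (i j : V) :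
    Aalpha G α i j = α * (if i = j then (G.degree i : ℝ) else 0)
      + (1-α) * (if G.Adj i j then 1 else 0) := by
  simp [Aalpha, Matrix.diagonal_apply]

section Blocks
variable {n₁ n₂ r₁ r₂ : ℕ} (G₁ : SimpleGraph (Fin n₁)) (G₂ : SimpleGraph (Fin n₂)) (α x : ℝ)

def Bm : Matrix (Fin n₁) G₁.edgeSet ℝ :=
  Matrix.of fun v e => if v ∈ (e : Sym2 (Fin n₁)) then 1 else 0

lemma block_decomp (hreg₁ : G₁.IsRegularOfDegree r₁) (hreg₂ : G₂.IsRegularOfDegree r₂) :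
    x • (1 : Matrix (Fin n₁ ⊕ (↥G₁.edgeSet ⊕ Fin n₂)) (Fin n₁ ⊕ (↥G₁.edgeSet ⊕ Fin n₂)) ℝ)
      - Aalpha (rVertexJoin G₁ G₂) α =
    Matrix.fromBlocks
      ((x - α*(2*r₁+n₂)) • (1 : Matrix (Fin n₁) (Fin n₁) ℝ) - (1-α) • G₁.adjMatrix ℝ)
      (Matrix.of fun v k => Sum.elim (fun e : G₁.edgeSet => -((1-α) * Bm G₁ v e))
        (fun _ : Fin n₂ => -(1-α)) k)
      (Matrix.of fun k v => Sum.elim (fun e : G₁.edgeSet => -((1-α) * Bm G₁ v e))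
        (fun _ : Fin n₂ => -(1-α)) k)
      (Matrix.fromBlocks
        ((x - 2*α) • (1 : Matrix G₁.edgeSet G₁.edgeSet ℝ)) 0 0
        ((x - α*n₁) • (1 : Matrix (Fin n₂) (Fin n₂) ℝ) - Aalpha G₂ α)) := by
  ext i j
  rcases i with v | e | u <;> rcases j with w | f | z
  · simp only [Matrix.sub_apply, Matrix.smul_apply, Matrix.fromBlocks_apply₁₁, smul_eq_mul,
      Aalpha_apply, Matrix.one_apply, Sum.inl.injEq, rvj_adj_ll, SimpleGraph.adjMatrix_apply]
    by_cases h : v = w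
    · subst h
      rw [rvj_degree_inl G₁ G₂ hreg₁ v]
      simp only [if_pos rfl, if_neg (G₁.irrefl (v := v)), if_true]
      ring
    · simp only [if_neg h]
      ring
  · simp only [Matrix.sub_apply, Matrix.smul_apply, Matrix.fromBlocks_apply₁₂, smul_eq_mul,
      Aalpha_apply, Matrix.one_apply, Matrix.of_apply, Sum.elim_inl, Bm,
      if_neg (by simp : ¬ (Sum.inl v : Fin n₁ ⊕ (↥G₁.edgeSet ⊕ Fin n₂)) = Sum.inr (Sum.inl f))]
    rw [show ((rVertexJoin G₁ G₂).Adj (Sum.inl v) (Sum.inr (Sum.inl f)))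
        = (v ∈ (f : Sym2 (Fin n₁))) from propext (rvj_adj_le G₁ G₂ v f)]
    by_cases h : v ∈ (f : Sym2 (Fin n₁)) <;> simp [h]
  · simp only [Matrix.sub_apply, Matrix.smul_apply, Matrix.fromBlocks_apply₁₂, smul_eq_mul,
      Aalpha_apply, Matrix.one_apply, Matrix.of_apply, Sum.elim_inr,
      if_neg (by simp : ¬ (Sum.inl v : Fin n₁ ⊕ (↥G₁.edgeSet ⊕ Fin n₂)) = Sum.inr (Sum.inr z)),
      if_pos (rvj_adj_lr G₁ G₂ v z)]
    ring
  · simp only [Matrix.sub_apply, Matrix.smul_apply, Matrix.fromBlocks_apply₂₁, smul_eq_mul,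
      Aalpha_apply, Matrix.one_apply, Matrix.of_apply, Sum.elim_inl, Bm,
      if_neg (by simp : ¬ (Sum.inr (Sum.inl e) : Fin n₁ ⊕ (↥G₁.edgeSet ⊕ Fin n₂)) = Sum.inl w)]
    rw [show ((rVertexJoin G₁ G₂).Adj (Sum.inr (Sum.inl e)) (Sum.inl w))
        = (w ∈ (e : Sym2 (Fin n₁))) from propext (((rVertexJoin G₁ G₂).adj_comm _ _).trans
          (rvj_adj_le G₁ G₂ w e))]
    by_cases h : w ∈ (e : Sym2 (Fin n₁)) <;> simp [h]
  · simp only [Matrix.sub_apply, Matrix.smul_apply, Matrix.fromBlocks_apply₂₂,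
      Matrix.fromBlocks_apply₁₁, smul_eq_mul, Aalpha_apply, Matrix.one_apply, Sum.inr.injEq,
      Sum.inl.injEq]
    by_cases h : e = f
    · rw [if_pos h, if_pos h, rvj_degree_edge G₁ G₂ e,
        if_neg (fun hadj => rvj_adj_ee G₁ G₂ e f hadj)]
      ring
    · rw [if_neg h, if_neg h, if_neg (fun hadj => rvj_adj_ee G₁ G₂ e f hadj)]
      ring
  · simp only [Matrix.sub_apply, Matrix.smul_apply, Matrix.fromBlocks_apply₂₂,
      Matrix.fromBlocks_apply₁₂, Matrix.zero_apply, smul_eq_mul, Aalpha_apply, Matrix.one_apply,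
      if_neg (by simp : ¬ (Sum.inr (Sum.inl e) : Fin n₁ ⊕ (↥G₁.edgeSet ⊕ Fin n₂))
        = Sum.inr (Sum.inr z)),
      if_neg (fun hadj => rvj_adj_er G₁ G₂ e z hadj)]
    ring
  · simp only [Matrix.sub_apply, Matrix.smul_apply, Matrix.fromBlocks_apply₂₁, smul_eq_mul,
      Aalpha_apply, Matrix.one_apply, Matrix.of_apply, Sum.elim_inr,
      if_neg (by simp : ¬ (Sum.inr (Sum.inr u) : Fin n₁ ⊕ (↥G₁.edgeSet ⊕ Fin n₂)) = Sum.inl w),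
      if_pos (((rVertexJoin G₁ G₂).adj_comm _ _).mp (rvj_adj_lr G₁ G₂ w u))]
    ring
  · simp only [Matrix.sub_apply, Matrix.smul_apply, Matrix.fromBlocks_apply₂₂,
      Matrix.fromBlocks_apply₂₁, Matrix.zero_apply, smul_eq_mul, Aalpha_apply, Matrix.one_apply,
      if_neg (by simp : ¬ (Sum.inr (Sum.inr u) : Fin n₁ ⊕ (↥G₁.edgeSet ⊕ Fin n₂))
        = Sum.inr (Sum.inl f))]
    have hP : ¬ (rVertexJoin G₁ G₂).Adj (Sum.inr (Sum.inr u)) (Sum.inr (Sum.inl f)) :=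
      fun hadj => rvj_adj_er G₁ G₂ f u hadj.symm
    rw [if_neg hP]
    ring
  · simp only [Matrix.sub_apply, Matrix.smul_apply, Matrix.fromBlocks_apply₂₂, smul_eq_mul,
      Aalpha_apply, Matrix.one_apply, Sum.inr.injEq, rvj_adj_rr]
    by_cases h : u = z
    · subst h
      rw [rvj_degree_inr G₁ G₂ hreg₂ u]
      simp only [if_pos rfl, if_neg (G₂.irrefl (v := u)), hreg₂ u, if_true]
      ring
    · simp only [if_neg h]
      ring

end Blocks

lemma heval_of_charpoly {m : Type*} [Fintype m] [DecidableEq m] {k : ℕ}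
    (M : Matrix m m ℝ) (μ : Fin k → ℝ)
    (hch : M.charpoly = ∏ i, (X - C (μ i))) (y : ℝ) :
    (y • (1 : Matrix m m ℝ) - M).det = ∏ i, (y - μ i) := by
  have h5 := congrArg (Polynomial.eval y) hch
  rw [eval_charpoly'] at h5
  rw [h5, Polynomial.eval_prod]
  simp

lemma inv_mulVec_ones {m : Type*} [Fintype m] [DecidableEq m] (M : Matrix m m ℝ)
    (hM : IsUnit M.det) {c : ℝ} (hc : c ≠ 0)
    (h : M *ᵥ (fun _ => (1:ℝ)) = fun _ => c) :
    M⁻¹ *ᵥ (fun _ => (1:ℝ)) = fun _ => c⁻¹ := by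
  have h2 : M⁻¹ *ᵥ (M *ᵥ fun _ => (1:ℝ)) = fun _ => (1:ℝ) := by
    rw [Matrix.mulVec_mulVec, Matrix.nonsing_inv_mul M hM, Matrix.one_mulVec]
  rw [h] at h2
  have h3 : (fun _ : m => (c:ℝ)) = c • (fun _ : m => (1:ℝ)) := by funext; simp
  rw [h3, Matrix.mulVec_smul] at h2
  funext i
  have h4 := congrFun h2 i
  simp only [Pi.smul_apply, smul_eq_mul] at h4
  exact eq_inv_of_mul_eq_one_right h4

lemma sum_sum_of_mulVec_ones {m : Type*} [Fintype m] (M : Matrix m m ℝ) {c : ℝ}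
    (h : M *ᵥ (fun _ => (1:ℝ)) = fun _ => c) :
    ∑ i, ∑ j, M i j = (Fintype.card m) * c := by
  have : ∀ i, ∑ j, M i j = c := by
    intro i
    have := congrFun h i
    simpa [Matrix.mulVec, dotProduct] using this
  rw [Finset.sum_congr rfl fun i _ => this i, Finset.sum_const, Finset.card_univ,
    nsmul_eq_mul]

lemma Aalpha_of_regular {n r : ℕ} (G : SimpleGraph (Fin n)) (hreg : G.IsRegularOfDegree r)
    (α : ℝ) : Aalpha G α = (α * r) • (1 : Matrix (Fin n) (Fin n) ℝ) + (1-α) • G.adjMatrix ℝ := by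
  ext i j
  rcases eq_or_ne i j with h | h
  · subst h
    simp [Aalpha_apply, Matrix.one_apply, hreg i, G.irrefl]
  · simp [Aalpha_apply, Matrix.one_apply, h]

section KeyDet
variable {n₁ n₂ r₁ r₂ : ℕ} (G₁ : SimpleGraph (Fin n₁)) (G₂ : SimpleGraph (Fin n₂))

lemma key_det (hreg₁ : G₁.IsRegularOfDegree r₁) (hreg₂ : G₂.IsRegularOfDegree r₂)
    (α : ℝ)
    (μ₁ : Fin n₁ → ℝ) (hμ₁ch : (Aalpha G₁ α).charpoly = ∏ i, (X - C (μ₁ i)))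
    (μ₂ : Fin n₂ → ℝ) (hμ₂ch : (Aalpha G₂ α).charpoly = ∏ i, (X - C (μ₂ i)))
    (x U W S : ℝ)
    (hU : U = x - α*(2*r₁+n₂) + α*r₁ + (x-2*α)⁻¹ * (α*(1-α)*r₁ - (1-α)^2*r₁))
    (hW : W = -(1 + (1-α)*(x-2*α)⁻¹))
    (hS : S = -((1-α)^2*n₂*(x - α*(n₁:ℝ) - r₂)⁻¹))
    (hc : x - 2*α ≠ 0) (ht : x - α*(n₁:ℝ) - r₂ ≠ 0)
    (hD2 : ∀ i, x - α*(n₁:ℝ) - μ₂ i ≠ 0)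
    (hQ : ∀ i, U + W * μ₁ i ≠ 0) (hQr : U + W * r₁ ≠ 0) :
    (x • (1 : Matrix (Fin n₁ ⊕ (↥G₁.edgeSet ⊕ Fin n₂)) (Fin n₁ ⊕ (↥G₁.edgeSet ⊕ Fin n₂)) ℝ)
      - Aalpha (rVertexJoin G₁ G₂) α).det
    = (x - 2*α)^(Fintype.card G₁.edgeSet) * (∏ i, (x - α*(n₁:ℝ) - μ₂ i))
      * (∏ i, (U + W * μ₁ i)) * (1 + S * n₁ * (U + W * r₁)⁻¹) := by
  classical
  have hA1 : Aalpha G₁ α = (α * r₁) • (1 : Matrix (Fin n₁) (Fin n₁) ℝ)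
      + (1-α) • G₁.adjMatrix ℝ := Aalpha_of_regular G₁ hreg₁ α
  set D₁ : Matrix (↥G₁.edgeSet) (↥G₁.edgeSet) ℝ := (x - 2*α) • 1 with hD₁def
  set D₂ : Matrix (Fin n₂) (Fin n₂) ℝ := (x - α*(n₁:ℝ)) • 1 - Aalpha G₂ α with hD₂def
  have hD₂det : D₂.det = ∏ i, (x - α*(n₁:ℝ) - μ₂ i) :=
    heval_of_charpoly (Aalpha G₂ α) μ₂ hμ₂ch (x - α*(n₁:ℝ))
  have hD₂unit : IsUnit D₂.det := by
    rw [hD₂det]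
    exact (Finset.prod_ne_zero_iff.mpr fun i _ => hD2 i).isUnit
  haveI invD₂ : Invertible D₂ := D₂.invertibleOfIsUnitDet hD₂unit
  have hmul1 : ((x - 2*α)⁻¹ • (1 : Matrix (↥G₁.edgeSet) (↥G₁.edgeSet) ℝ)) * D₁ = 1 := by
    rw [hD₁def, Matrix.smul_mul, Matrix.mul_smul, smul_smul, inv_mul_cancel₀ hc,
      Matrix.one_mul, one_smul]
  have hmul2 : D₁ * ((x - 2*α)⁻¹ • (1 : Matrix (↥G₁.edgeSet) (↥G₁.edgeSet) ℝ)) = 1 := by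
    rw [hD₁def, Matrix.smul_mul, Matrix.mul_smul, smul_smul, mul_inv_cancel₀ hc,
      Matrix.one_mul, one_smul]
  haveI invD₁ : Invertible D₁ := ⟨(x - 2*α)⁻¹ • 1, hmul1, hmul2⟩
  haveI invDb : Invertible (Matrix.fromBlocks D₁ 0 0 D₂) :=
    Matrix.fromBlocksZero₂₁Invertible D₁ 0 D₂
  set iDb : Matrix (↥G₁.edgeSet ⊕ Fin n₂) (↥G₁.edgeSet ⊕ Fin n₂) ℝ :=
    Matrix.fromBlocks ((x - 2*α)⁻¹ • 1) 0 0 D₂⁻¹ with hiDbdef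
  have hinvDb : (⅟(Matrix.fromBlocks D₁ 0 0 D₂)
      : Matrix (↥G₁.edgeSet ⊕ Fin n₂) (↥G₁.edgeSet ⊕ Fin n₂) ℝ) = iDb := by
    apply invOf_eq_right_inv
    rw [hiDbdef, Matrix.fromBlocks_multiply]
    simp only [Matrix.mul_zero, Matrix.zero_mul, add_zero, zero_add, hmul2,
      Matrix.mul_nonsing_inv D₂ hD₂unit]
    rw [← Matrix.fromBlocks_one]
  have hD₂ones : D₂ *ᵥ (fun _ => (1:ℝ)) = fun _ => (x - α*(n₁:ℝ) - r₂) := by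
    rw [hD₂def, Matrix.sub_mulVec, Aalpha_mulVec_ones G₂ hreg₂ α, Matrix.smul_mulVec,
      Matrix.one_mulVec]
    funext i; simp
  have hD₂invones : D₂⁻¹ *ᵥ (fun _ => (1:ℝ)) = fun _ => (x - α*(n₁:ℝ) - r₂)⁻¹ :=
    inv_mulVec_ones D₂ hD₂unit ht hD₂ones
  have hD₂invsum : ∑ z : Fin n₂, ∑ z' : Fin n₂, D₂⁻¹ z z' = n₂ * (x - α*(n₁:ℝ) - r₂)⁻¹ := by
    have h6 := sum_sum_of_mulVec_ones (D₂⁻¹) hD₂invones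
    simpa using h6
  set Bb : Matrix (Fin n₁) (↥G₁.edgeSet ⊕ Fin n₂) ℝ :=
    Matrix.of fun v k => Sum.elim (fun e : ↥G₁.edgeSet => -((1-α) * Bm G₁ v e))
      (fun _ : Fin n₂ => -(1-α)) k with hBb
  set Cb : Matrix (↥G₁.edgeSet ⊕ Fin n₂) (Fin n₁) ℝ :=
    Matrix.of fun k v => Sum.elim (fun e : ↥G₁.edgeSet => -((1-α) * Bm G₁ v e))
      (fun _ : Fin n₂ => -(1-α)) k with hCb
  set Q : Matrix (Fin n₁) (Fin n₁) ℝ := U • 1 + W • Aalpha G₁ α with hQdef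
  -- the incidence-sum identity
  have hBB : ∀ v v' : Fin n₁, (∑ e : ↥G₁.edgeSet, Bm G₁ v e * Bm G₁ v' e)
      = (if v = v' then (r₁ : ℝ) else 0) + G₁.adjMatrix ℝ v v' := by
    intro v v'
    by_cases h : v = v'
    · subst h
      have h7 : ∀ e : ↥G₁.edgeSet, Bm G₁ v e * Bm G₁ v e = Bm G₁ v e := by
        intro e
        by_cases hm : v ∈ (e : Sym2 (Fin n₁)) <;> simp [Bm, hm]
      rw [Finset.sum_congr rfl fun e _ => h7 e]
      have h8 := sum_incidence G₁ v
      rw [show (∑ e : ↥G₁.edgeSet, Bm G₁ v e)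
          = ∑ e : ↥G₁.edgeSet, (if v ∈ (e : Sym2 (Fin n₁)) then (1:ℝ) else 0) from rfl, h8,
        hreg₁ v]
      simp [G₁.irrefl]
    · rw [show (∑ e : ↥G₁.edgeSet, Bm G₁ v e * Bm G₁ v' e)
          = ∑ e : ↥G₁.edgeSet, (if v ∈ (e : Sym2 (Fin n₁)) then (1:ℝ) else 0)
            * (if v' ∈ (e : Sym2 (Fin n₁)) then (1:ℝ) else 0) from rfl,
        sum_incidence_pair G₁ h]
      simp [h]
  -- entry computation of B ⅟D C
  have hBDC : ∀ v v' : Fin n₁, (Bb * iDb * Cb) v v'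
      = (1-α)^2 * (x - 2*α)⁻¹ * ((if v = v' then (r₁:ℝ) else 0) + G₁.adjMatrix ℝ v v')
        + (1-α)^2 * ((n₂:ℝ) * (x - α*(n₁:ℝ) - r₂)⁻¹) := by
    intro v v'
    have hrow : ∀ l, (Bb * iDb) v l
        = Sum.elim (fun e : ↥G₁.edgeSet => -((1-α) * Bm G₁ v e) * (x - 2*α)⁻¹)
          (fun z : Fin n₂ => ∑ z', (-(1-α)) * D₂⁻¹ z' z) l := by
      intro l
      rcases l with f | z
      · rw [Matrix.mul_apply, Fintype.sum_sum_type]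
        simp only [hBb, hiDbdef, Matrix.of_apply, Sum.elim_inl, Sum.elim_inr,
          Matrix.fromBlocks_apply₁₁, Matrix.fromBlocks_apply₂₁, Matrix.smul_apply,
          Matrix.one_apply, Matrix.zero_apply, mul_zero, Finset.sum_const_zero, add_zero,
          smul_eq_mul, mul_ite, mul_one]
        rw [Finset.sum_ite_eq' Finset.univ f (fun e => -((1-α) * Bm G₁ v e) * (x - 2*α)⁻¹)]
        simp
      · rw [Matrix.mul_apply, Fintype.sum_sum_type]
        simp only [hBb, hiDbdef, Matrix.of_apply, Sum.elim_inl, Sum.elim_inr,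
          Matrix.fromBlocks_apply₁₂, Matrix.fromBlocks_apply₂₂, Matrix.zero_apply, mul_zero,
          Finset.sum_const_zero, zero_add]
    rw [Matrix.mul_apply, Fintype.sum_sum_type]
    simp only [hrow, Sum.elim_inl, Sum.elim_inr, hCb, Matrix.of_apply]
    have hE : ∑ f : ↥G₁.edgeSet, (-((1-α) * Bm G₁ v f) * (x - 2*α)⁻¹)
        * (-((1-α) * Bm G₁ v' f))
        = (1-α)^2 * (x - 2*α)⁻¹ * ((if v = v' then (r₁:ℝ) else 0) + G₁.adjMatrix ℝ v v') := by
      rw [← hBB v v', Finset.mul_sum]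
      refine Finset.sum_congr rfl fun f _ => ?_
      ring
    have hWsum : ∑ z : Fin n₂, (∑ z', (-(1-α)) * D₂⁻¹ z' z) * (-(1-α))
        = (1-α)^2 * ((n₂:ℝ) * (x - α*(n₁:ℝ) - r₂)⁻¹) := by
      have h9 : ∑ z : Fin n₂, (∑ z', (-(1-α)) * D₂⁻¹ z' z) * (-(1-α))
          = (1-α)^2 * ∑ z : Fin n₂, ∑ z', D₂⁻¹ z' z := by
        rw [Finset.mul_sum]
        refine Finset.sum_congr rfl fun z _ => ?_
        rw [Finset.sum_mul, Finset.mul_sum]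
        refine Finset.sum_congr rfl fun z' _ => ?_
        ring
      rw [h9, Finset.sum_comm, hD₂invsum]
    rw [hE, hWsum]
  -- the Schur complement is Q + S·J
  have hSchur : ((x - α*(2*r₁+n₂)) • (1 : Matrix (Fin n₁) (Fin n₁) ℝ)
        - (1-α) • G₁.adjMatrix ℝ) - Bb * iDb * Cb
      = Q + Matrix.replicateCol Unit (fun _ => S) * Matrix.replicateRow Unit (fun _ => (1:ℝ)) := by
    ext v v'
    rw [Matrix.sub_apply, Matrix.add_apply, hBDC v v']
    have hcol : (Matrix.replicateCol Unit (fun _ => S) * Matrix.replicateRow Unit (fun _ => (1:ℝ))) v v' = S := by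
      rw [Matrix.mul_apply]
      simp
    rw [hcol, hQdef, hA1]
    simp only [Matrix.sub_apply, Matrix.add_apply, Matrix.smul_apply, Matrix.one_apply,
      smul_eq_mul]
    by_cases h : v = v'
    · subst h
      simp only [if_pos rfl, SimpleGraph.adjMatrix_apply, if_neg (G₁.irrefl (v := v))]
      rw [hU, hW, hS]
      simp only [if_true]
      have hc' : x - α*2 ≠ 0 := by rwa [mul_comm] at hc
      field_simp
      ring
    · by_cases hadj : G₁.Adj v v'
      · simp only [if_neg h, SimpleGraph.adjMatrix_apply, if_pos hadj]
        rw [hU, hW, hS]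
        field_simp
        ring
      · simp only [if_neg h, SimpleGraph.adjMatrix_apply, if_neg hadj]
        rw [hU, hW, hS]
        field_simp
        ring
  -- Q facts
  have hQdet : Q.det = ∏ i, (U + W * μ₁ i) := by
    rw [hQdef]
    exact det_aux (Aalpha G₁ α) μ₁ (heval_of_charpoly (Aalpha G₁ α) μ₁ hμ₁ch) U W
  have hQunit : IsUnit Q.det := by
    rw [hQdet]
    exact (Finset.prod_ne_zero_iff.mpr fun i _ => hQ i).isUnit
  have hQones : Q *ᵥ (fun _ => (1:ℝ)) = fun _ => (U + W * r₁) := by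
    rw [hQdef, Matrix.add_mulVec, Matrix.smul_mulVec, Matrix.smul_mulVec,
      Matrix.one_mulVec, Aalpha_mulVec_ones G₁ hreg₁ α]
    funext i; simp
  have hQinvones : Q⁻¹ *ᵥ (fun _ => (1:ℝ)) = fun _ => (U + W * r₁)⁻¹ :=
    inv_mulVec_ones Q hQunit hQr hQones
  have hQinvsum : ∑ i : Fin n₁, ∑ j : Fin n₁, Q⁻¹ i j = n₁ * (U + W * r₁)⁻¹ := by
    have h6 := sum_sum_of_mulVec_ones (Q⁻¹) hQinvones
    simpa using h6
  -- determinant of the Schur complement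
  have hdetP : (((x - α*(2*r₁+n₂)) • (1 : Matrix (Fin n₁) (Fin n₁) ℝ)
        - (1-α) • G₁.adjMatrix ℝ) - Bb * iDb * Cb).det
      = (∏ i, (U + W * μ₁ i)) * (1 + S * n₁ * (U + W * r₁)⁻¹) := by
    rw [hSchur, Matrix.det_add_replicateCol_mul_replicateRow hQunit, hQdet]
    congr 1
    rw [Matrix.det_unique]
    have h10 : ((Matrix.replicateRow Unit (fun _ : Fin n₁ => (1:ℝ)) * Q⁻¹ * Matrix.replicateCol Unit (fun _ : Fin n₁ => S) :
        Matrix Unit Unit ℝ)) default default = S * n₁ * (U + W * r₁)⁻¹ := by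
      rw [Matrix.mul_apply]
      have h11 : ∀ j, (Matrix.replicateRow Unit (fun _ : Fin n₁ => (1:ℝ)) * Q⁻¹) default j
          = ∑ i : Fin n₁, Q⁻¹ i j := by
        intro j
        rw [Matrix.mul_apply]
        simp [Matrix.replicateRow_apply]
      rw [Finset.sum_congr rfl fun j _ => by rw [h11 j]]
      simp only [Matrix.replicateCol_apply]
      rw [← Finset.sum_mul, Finset.sum_comm, hQinvsum]
      ring
    rw [Matrix.add_apply, Matrix.one_apply_eq, h10]
  -- assemble
  rw [block_decomp G₁ G₂ α x hreg₁ hreg₂, Matrix.det_fromBlocks₂₂, hinvDb]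
  rw [Matrix.det_fromBlocks_zero₂₁, hD₂det]
  have hD₁det : D₁.det = (x - 2*α)^(Fintype.card ↥G₁.edgeSet) := by
    rw [hD₁def, Matrix.det_smul, Matrix.det_one, mul_one]
  rw [hD₁det, hdetP]
  ring

end KeyDet

lemma bridge (α r₁ n₂ x μ : ℝ) (hc : x - 2*α ≠ 0) :
    (x - 2*α) * ((x - α*(2*r₁+n₂) + α*r₁ + (x-2*α)⁻¹ * (α*(1-α)*r₁ - (1-α)^2*r₁))
      + (-(1 + (1-α)*(x-2*α)⁻¹)) * μ)
    = x^2 - (2*α+α*r₁+α*n₂+μ)*x + (2*α^2*n₂+3*α*r₁-r₁+(3*α-1)*μ) := by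
  field_simp
  ring

lemma Fbridge (α r₁ r₂ n₁ n₂ x U W S : ℝ)
    (hU : U = x - α*(2*r₁+n₂) + α*r₁ + (x-2*α)⁻¹ * (α*(1-α)*r₁ - (1-α)^2*r₁))
    (hW : W = -(1 + (1-α)*(x-2*α)⁻¹))
    (hS : S = -((1-α)^2*n₂*(x - α*n₁ - r₂)⁻¹))
    (hc : x - 2*α ≠ 0) (ht : x - α*n₁ - r₂ ≠ 0) (hQr : U + W*r₁ ≠ 0) :
    (x - α*n₁ - r₂) * ((x-2*α)*(U + W*r₁)) * (1 + S*n₁*(U+W*r₁)⁻¹)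
    = (x - (α*n₁+r₂)) * (x^2 - (2*α+α*r₁+α*n₂+r₁)*x + (2*α^2*n₂+6*α*r₁-2*r₁))
      - n₁*n₂*(1-α)^2*(x-2*α) := by
  have key : (x - α*n₁ - r₂) * ((x-2*α)*(U + W*r₁)) * (1 + S*n₁*(U+W*r₁)⁻¹)
      = (x - α*n₁ - r₂) * ((x-2*α)*(U + W*r₁)) + (x-2*α)*((x - α*n₁ - r₂)*S)*n₁ := by
    field_simp
  rw [key, hU, hW, hS]
  have ha : (x - 2*α) * (x - 2*α)⁻¹ = 1 := mul_inv_cancel₀ hc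
  have hb : (x - α*n₁ - r₂) * (x - α*n₁ - r₂)⁻¹ = 1 := mul_inv_cancel₀ ht
  linear_combination ((x - α*n₁ - r₂) * ((α*(1-α)*r₁ - (1-α)^2*r₁) - (1-α)*r₁)) * ha
    - ((x-2*α)*(1-α)^2*n₂*n₁) * hb

lemma prod_split {n : ℕ} (hn : 0 < n) {M : Type*} [CommMonoid M] (f : Fin n → M) :
    ∏ i, f i = f ⟨0, hn⟩ * ∏ i ∈ Finset.univ.filter (fun i : Fin n => i.val ≠ 0), f i := by
  have hf : Finset.univ.filter (fun i : Fin n => i.val ≠ 0)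
      = Finset.univ.erase ⟨0, hn⟩ := by
    ext i
    simp [Fin.ext_iff]
  rw [hf, Finset.mul_prod_erase Finset.univ f (Finset.mem_univ _)]

lemma quad_ne_zero (a b : ℝ) : (X^2 - C a * X + C b : ℝ[X]) ≠ 0 := by
  intro h0
  have h1 := congrArg (fun p : ℝ[X] => p.coeff 2) h0
  simp [Polynomial.coeff_X_pow, Polynomial.coeff_C] at h1

lemma handshake_real {n r : ℕ} (G : SimpleGraph (Fin n)) (hreg : G.IsRegularOfDegree r) :
    n * r = 2 * Fintype.card G.edgeSet := by
  have h1 := G.sum_degrees_eq_twice_card_edges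
  rw [Finset.sum_congr rfl fun v _ => hreg v, Finset.sum_const, Finset.card_univ,
    Fintype.card_fin, smul_eq_mul] at h1
  rw [h1, SimpleGraph.edgeFinset_card]

lemma one_regular_structure {n : ℕ} (G : SimpleGraph (Fin n)) (hconn : G.Connected)
    (hreg : G.IsRegularOfDegree 1) :
    n = 2 ∧ ∀ hn : 0 < n, ∀ a : Fin n, a ≠ ⟨0, hn⟩ → G.Adj ⟨0, hn⟩ a := by
  have hne : Nonempty (Fin n) := hconn.nonempty
  have hn : 0 < n := Fin.pos_iff_nonempty.mpr hne
  set v₀ : Fin n := ⟨0, hn⟩ with hv₀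
  have huniq : ∀ v : Fin n, ∃ b, G.neighborFinset v = {b} := by
    intro v
    have := hreg v
    rw [← SimpleGraph.card_neighborFinset_eq_degree] at this
    exact Finset.card_eq_one.mp this
  obtain ⟨a, ha⟩ := huniq v₀
  have hadj₀ : G.Adj v₀ a := by
    have : a ∈ G.neighborFinset v₀ := by rw [ha]; exact Finset.mem_singleton_self a
    exact (SimpleGraph.mem_neighborFinset G v₀ a).mp this
  have hstep : ∀ c b : Fin n, G.Adj c b → (c = v₀ ∨ c = a) → (b = v₀ ∨ b = a) := by
    intro c b hcb hc
    rcases hc with h | h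
    · right
      have hmem : b ∈ G.neighborFinset v₀ :=
        (SimpleGraph.mem_neighborFinset G v₀ b).mpr (h ▸ hcb)
      rw [ha] at hmem
      exact Finset.mem_singleton.mp hmem
    · left
      obtain ⟨b', hb'⟩ := huniq a
      have h1 : b ∈ G.neighborFinset a := (SimpleGraph.mem_neighborFinset G a b).mpr (h ▸ hcb)
      have h2 : v₀ ∈ G.neighborFinset a :=
        (SimpleGraph.mem_neighborFinset G a v₀).mpr hadj₀.symm
      rw [hb'] at h1 h2
      rw [Finset.mem_singleton.mp h1, ← Finset.mem_singleton.mp h2]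
  have hwalk : ∀ (c d : Fin n), G.Walk c d → (c = v₀ ∨ c = a) → (d = v₀ ∨ d = a) := by
    intro c d p
    induction p with
    | nil => exact id
    | cons h p ih => exact fun hc => ih (hstep _ _ h hc)
  have hall : ∀ d : Fin n, d = v₀ ∨ d = a := by
    intro d
    obtain ⟨p⟩ := (hconn v₀ d)
    exact hwalk v₀ d p (Or.inl rfl)
  have hcardle : n ≤ 2 := by
    have hsub : (Finset.univ : Finset (Fin n)) ⊆ {v₀, a} := by
      intro d _
      rcases hall d with h | h <;> simp [h]
    calc n = (Finset.univ : Finset (Fin n)).card := by rw [Finset.card_univ, Fintype.card_fin]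
    _ ≤ ({v₀, a} : Finset (Fin n)).card := Finset.card_le_card hsub
    _ ≤ 2 := Finset.card_insert_le _ _ |>.trans (by simp)
  have hane : a ≠ v₀ := fun h => G.irrefl (h ▸ hadj₀)
  have hcardge : 2 ≤ n := by
    have : ({v₀, a} : Finset (Fin n)).card = 2 := by
      rw [Finset.card_insert_of_notMem (by simp [Ne.symm hane]), Finset.card_singleton]
    calc 2 = ({v₀, a} : Finset (Fin n)).card := this.symm
    _ ≤ (Finset.univ : Finset (Fin n)).card := Finset.card_le_card (Finset.subset_univ _)
    _ = n := by rw [Finset.card_univ, Fintype.card_fin]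
  refine ⟨le_antisymm hcardle hcardge, ?_⟩
  intro hn' b hb
  have : b = a := by
    rcases hall b with h | h
    · exact absurd h hb
    · exact h
  rw [this]
  exact hadj₀

section Core
variable {n₁ n₂ r₁ r₂ : ℕ} (G₁ : SimpleGraph (Fin n₁)) (G₂ : SimpleGraph (Fin n₂))

lemma core_identity (hreg₁ : G₁.IsRegularOfDegree r₁) (hreg₂ : G₂.IsRegularOfDegree r₂)
    (α : ℝ)
    (μ₁ : Fin n₁ → ℝ) (hμ₁ch : (Aalpha G₁ α).charpoly = ∏ i, (X - C (μ₁ i)))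
    (μ₂ : Fin n₂ → ℝ) (hμ₂ch : (Aalpha G₂ α).charpoly = ∏ i, (X - C (μ₂ i))) :
    (X - C (2*α))^n₁ * (X - C (α*n₁+(r₂:ℝ)))
      * (X^2 - C (2*α+α*r₁+α*n₂+(r₁:ℝ)) * X + C (2*α^2*n₂+3*α*r₁-r₁+(3*α-1)*r₁))
      * (Aalpha (rVertexJoin G₁ G₂) α).charpoly
    = (X - C (2*α))^(Fintype.card G₁.edgeSet) * (∏ i, (X - C (α*n₁ + μ₂ i)))
      * (∏ i, (X^2 - C (2*α+α*r₁+α*n₂+μ₁ i) * X + C (2*α^2*n₂+3*α*r₁-r₁+(3*α-1)*μ₁ i)))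
      * ((X - C (α*n₁+(r₂:ℝ)))
          * (X^2 - C (2*α+α*r₁+α*n₂+(r₁:ℝ)) * X + C (2*α^2*n₂+6*α*r₁-2*r₁))
        - C (n₁*n₂*(1-α)^2) * (X - C (2*α))) := by
  classical
  set badp : ℝ[X] := (X - C (2*α)) * (X - C (α*n₁+(r₂:ℝ)))
      * (∏ i, (X - C (α*n₁ + μ₂ i)))
      * (∏ i, (X^2 - C (2*α+α*r₁+α*n₂+μ₁ i) * X + C (2*α^2*n₂+3*α*r₁-r₁+(3*α-1)*μ₁ i)))
      * (X^2 - C (2*α+α*r₁+α*n₂+(r₁:ℝ)) * X + C (2*α^2*n₂+3*α*r₁-r₁+(3*α-1)*r₁))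
    with hbadp
  have hbadp_ne : badp ≠ 0 := by
    rw [hbadp]
    refine mul_ne_zero (mul_ne_zero (mul_ne_zero (mul_ne_zero
      (Polynomial.X_sub_C_ne_zero _) (Polynomial.X_sub_C_ne_zero _)) ?_) ?_) (quad_ne_zero _ _)
    · exact Finset.prod_ne_zero_iff.mpr fun i _ => Polynomial.X_sub_C_ne_zero _
    · exact Finset.prod_ne_zero_iff.mpr fun i _ => quad_ne_zero _ _
  apply Polynomial.eq_of_infinite_eval_eq
  have hfin : {x : ℝ | badp.IsRoot x}.Finite := Polynomial.finite_setOf_isRoot hbadp_ne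
  apply Set.Infinite.mono (s := {x : ℝ | badp.IsRoot x}ᶜ)
  swap
  · exact hfin.infinite_compl
  intro x hx
  simp only [Set.mem_compl_iff, Set.mem_setOf_eq, Polynomial.IsRoot] at hx
  -- extract nonvanishing facts
  have hevalbad : Polynomial.eval x badp
      = (x - 2*α) * (x - (α*n₁+(r₂:ℝ)))
        * (∏ i, (x - (α*n₁ + μ₂ i)))
        * (∏ i, (x^2 - (2*α+α*r₁+α*n₂+μ₁ i) * x + (2*α^2*n₂+3*α*r₁-r₁+(3*α-1)*μ₁ i)))
        * (x^2 - (2*α+α*r₁+α*n₂+(r₁:ℝ)) * x + (2*α^2*n₂+3*α*r₁-r₁+(3*α-1)*r₁)) := by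
    simp [hbadp, Polynomial.eval_prod]
  rw [hevalbad] at hx
  have hc : x - 2*α ≠ 0 := fun h => hx (by rw [h]; ring)
  have ht0 : x - (α*n₁+(r₂:ℝ)) ≠ 0 := by
    intro h
    apply hx
    rw [h]; ring
  have ht : x - α*(n₁:ℝ) - r₂ ≠ 0 := fun h => ht0 (by linarith)
  have hD2 : ∀ i, x - α*(n₁:ℝ) - μ₂ i ≠ 0 := by
    intro i h
    apply hx
    have : x - (α*n₁ + μ₂ i) = 0 := by linarith
    rw [Finset.prod_eq_zero (Finset.mem_univ i) this]
    ring
  have hq : ∀ μ : ℝ, x^2 - (2*α+α*r₁+α*n₂+μ) * x + (2*α^2*n₂+3*α*r₁-r₁+(3*α-1)*μ) ≠ 0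
      → False ∨ True := fun _ _ => Or.inr trivial
  have hGq : ∀ i, x^2 - (2*α+α*r₁+α*n₂+μ₁ i) * x + (2*α^2*n₂+3*α*r₁-r₁+(3*α-1)*μ₁ i) ≠ 0 := by
    intro i h
    apply hx
    rw [Finset.prod_eq_zero (Finset.mem_univ i) h]
    ring
  have hGqr : x^2 - (2*α+α*r₁+α*n₂+(r₁:ℝ)) * x + (2*α^2*n₂+3*α*r₁-r₁+(3*α-1)*r₁) ≠ 0 := by
    intro h
    apply hx
    rw [h]; ring
  -- introduce U W S
  set U : ℝ := x - α*(2*r₁+n₂) + α*r₁ + (x-2*α)⁻¹ * (α*(1-α)*r₁ - (1-α)^2*r₁) with hU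
  set W : ℝ := -(1 + (1-α)*(x-2*α)⁻¹) with hW
  set S : ℝ := -((1-α)^2*n₂*(x - α*(n₁:ℝ) - r₂)⁻¹) with hS
  have hbridge : ∀ μ : ℝ, (x - 2*α) * (U + W * μ)
      = x^2 - (2*α+α*r₁+α*n₂+μ)*x + (2*α^2*n₂+3*α*r₁-r₁+(3*α-1)*μ) := by
    intro μ
    rw [hU, hW]
    exact bridge α r₁ n₂ x μ hc
  have hQ : ∀ i, U + W * μ₁ i ≠ 0 := by
    intro i h
    apply hGq i
    rw [← hbridge (μ₁ i), h, mul_zero]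
  have hQr : U + W * (r₁:ℝ) ≠ 0 := by
    intro h
    apply hGqr
    rw [← hbridge (r₁:ℝ), h, mul_zero]
  have hkey := key_det G₁ G₂ hreg₁ hreg₂ α μ₁ hμ₁ch μ₂ hμ₂ch x U W S hU hW hS hc ht hD2 hQ hQr
  have hLHSev : Polynomial.eval x ((Aalpha (rVertexJoin G₁ G₂) α).charpoly)
      = (x • (1 : Matrix (Fin n₁ ⊕ (↥G₁.edgeSet ⊕ Fin n₂))
          (Fin n₁ ⊕ (↥G₁.edgeSet ⊕ Fin n₂)) ℝ) - Aalpha (rVertexJoin G₁ G₂) α).det :=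
    eval_charpoly' _ x
  have hFb := Fbridge α r₁ r₂ n₁ n₂ x U W S hU hW hS hc ht hQr
  -- eval both sides
  show Polynomial.eval x _ = Polynomial.eval x _
  simp only [Polynomial.eval_mul, Polynomial.eval_pow, Polynomial.eval_sub,
    Polynomial.eval_add, Polynomial.eval_X, Polynomial.eval_C, Polynomial.eval_prod,
    Polynomial.eval_ofNat]
  rw [hLHSev, hkey]
  have hprodq : ∏ i : Fin n₁, (x^2 - (2*α+α*r₁+α*n₂+μ₁ i) * x
      + (2*α^2*n₂+3*α*r₁-r₁+(3*α-1)*μ₁ i)) = (x - 2*α)^n₁ * ∏ i, (U + W * μ₁ i) := by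
    rw [Finset.prod_congr rfl fun i _ => (hbridge (μ₁ i)).symm, Finset.prod_mul_distrib]
    congr 1
    rw [Finset.prod_const, Finset.card_univ, Fintype.card_fin]
  have hprod2 : ∏ i : Fin n₂, (x - (α*(n₁:ℝ) + μ₂ i)) = ∏ i, (x - α*(n₁:ℝ) - μ₂ i) :=
    Finset.prod_congr rfl fun i _ => by ring
  rw [hprodq, hprod2]
  rw [← hbridge (r₁:ℝ)]
  have hrw : x - (α*(n₁:ℝ)+(r₂:ℝ)) = x - α*(n₁:ℝ) - (r₂:ℝ) := by ring
  rw [hrw] at hFb ⊢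
  rw [← hFb]
  ring
end Core


/-- Corollary: the `A_α`-spectrum (as the factorization of the `A_α`-characteristic
polynomial) of the `R`-vertex join `G₁⟨v⟩G₂` of an `r₁`-regular graph `G₁` and an
`r₂`-regular graph `G₂`, in the cases `r₁ = 1` and `r₁ ≥ 2`. -/
theorem Aalpha_spectrum_rVertexJoin_regular
    {n₁ m₁ n₂ r₁ r₂ : ℕ} (G₁ : SimpleGraph (Fin n₁)) (G₂ : SimpleGraph (Fin n₂))
    (hconn₁ : G₁.Connected) (hconn₂ : G₂.Connected)
    (hreg₁ : G₁.IsRegularOfDegree r₁) (hreg₂ : G₂.IsRegularOfDegree r₂)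
    (hm : Fintype.card G₁.edgeSet = m₁)
    (α : ℝ) (hα : α ∈ Set.Icc (0 : ℝ) 1)
    (μ₁ : Fin n₁ → ℝ) (hμ₁ : Antitone μ₁)
    (hμ₁ch : (Aalpha G₁ α).charpoly = ∏ i, (X - C (μ₁ i)))
    (μ₂ : Fin n₂ → ℝ) (hμ₂ : Antitone μ₂)
    (hμ₂ch : (Aalpha G₂ α).charpoly = ∏ i, (X - C (μ₂ i))) :
    (r₁ = 1 →
      (Aalpha (rVertexJoin G₁ G₂) α).charpoly =
        (X - C (α * (3 + n₂) - 1)) *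
        (∏ i ∈ Finset.univ.filter (fun i : Fin n₂ => i.val ≠ 0),
          (X - C (2 * α + μ₂ i))) *
        ((X - C (2 * α + r₂)) *
            (X ^ 2 - C (3 * α + α * n₂ + 1) * X + C (2 * α ^ 2 * n₂ + 6 * α - 2))
          - C (2 * n₂ * (1 - α) ^ 2) * (X - C (2 * α)))) ∧
    (2 ≤ r₁ →
      (Aalpha (rVertexJoin G₁ G₂) α).charpoly =
        (X - C (2 * α)) ^ (m₁ - n₁) *
        (∏ i ∈ Finset.univ.filter (fun i : Fin n₂ => i.val ≠ 0),
          (X - C (α * n₁ + μ₂ i))) *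
        (∏ i ∈ Finset.univ.filter (fun i : Fin n₁ => i.val ≠ 0),
          (X ^ 2 - C (2 * α + α * r₁ + α * n₂ + μ₁ i) * X
            + C (2 * α ^ 2 * n₂ + 3 * α * r₁ - r₁ + (3 * α - 1) * μ₁ i))) *
        ((X - C (α * n₁ + r₂)) *
            (X ^ 2 - C (2 * α + α * r₁ + α * n₂ + r₁) * X
              + C (2 * α ^ 2 * n₂ + 6 * α * r₁ - 2 * r₁))
          - C (n₁ * n₂ * (1 - α) ^ 2) * (X - C (2 * α)))) := by
  have hn₁ : 0 < n₁ := Fin.pos_iff_nonempty.mpr hconn₁.nonempty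
  have hn₂ : 0 < n₂ := Fin.pos_iff_nonempty.mpr hconn₂.nonempty
  have hμ₁0 : μ₁ ⟨0, hn₁⟩ = (r₁ : ℝ) := mu_zero_eq_r G₁ hn₁ hreg₁ hα μ₁ hμ₁ hμ₁ch
  have hμ₂0 : μ₂ ⟨0, hn₂⟩ = (r₂ : ℝ) := mu_zero_eq_r G₂ hn₂ hreg₂ hα μ₂ hμ₂ hμ₂ch
  have hcore := core_identity G₁ G₂ hreg₁ hreg₂ α μ₁ hμ₁ch μ₂ hμ₂ch
  rw [hm] at hcore
  have hhs := handshake_real G₁ hreg₁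
  rw [hm] at hhs
  have hsplit₂ : (∏ i, (X - C (α*(n₁:ℝ) + μ₂ i)) : ℝ[X])
      = (X - C (α*(n₁:ℝ)+(r₂:ℝ))) * ∏ i ∈ Finset.univ.filter (fun i : Fin n₂ => i.val ≠ 0),
          (X - C (α*(n₁:ℝ) + μ₂ i)) := by
    rw [prod_split hn₂ (fun i => (X - C (α*(n₁:ℝ) + μ₂ i)) : Fin n₂ → ℝ[X]), hμ₂0]
  constructor
  · -- case r₁ = 1
    intro hr1
    subst hr1
    obtain ⟨hn12, hadj⟩ := one_regular_structure G₁ hconn₁ hreg₁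
    subst hn12
    have hm1 : m₁ = 1 := by omega
    subst hm1
    -- second eigenvalue of G₁
    have hμ₁0' : μ₁ 0 = 1 := by
      have h := hμ₁0
      norm_num at h
      exact h
    have htr : (Aalpha G₁ α).trace = 2*α := by
      have hdiag : ∀ v : Fin 2, Aalpha G₁ α v v = α := by
        intro v
        rw [Aalpha_apply, if_pos rfl, if_neg (G₁.irrefl (v := v)), hreg₁ v]
        norm_num
      rw [Matrix.trace]
      rw [show ∑ v : Fin 2, (Aalpha G₁ α).diag v = ∑ v : Fin 2, α from
        Finset.sum_congr rfl fun v _ => hdiag v]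
      rw [Fin.sum_univ_two]
      ring
    have hcoeff : (Aalpha G₁ α).charpoly.coeff 1 = -(2*α) := by
      have h := Matrix.trace_eq_neg_charpoly_coeff (Aalpha G₁ α)
      rw [htr] at h
      have hcard2 : Fintype.card (Fin 2) - 1 = 1 := by simp
      rw [hcard2] at h
      linarith
    have hμ₁1 : μ₁ 1 = 2*α - 1 := by
      have h := congrArg (fun p : ℝ[X] => p.coeff 1) hμ₁ch
      rw [hcoeff, Fin.prod_univ_two] at h
      have hexp : (X - C (μ₁ 0)) * (X - C (μ₁ 1))
          = X^2 - C (μ₁ 0 + μ₁ 1) * X + C (μ₁ 0 * μ₁ 1) := by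
        rw [C_add, C_mul]; ring
      rw [hexp] at h
      simp only [Polynomial.coeff_add, Polynomial.coeff_sub, Polynomial.coeff_X_pow,
        Polynomial.coeff_C_mul, Polynomial.coeff_X_one, Polynomial.coeff_C] at h
      norm_num at h
      rw [hμ₁0'] at h
      linarith
    -- rewrite core
    rw [hsplit₂, Fin.prod_univ_two, hμ₁0', hμ₁1] at hcore
    push_cast at hcore
    have hgen : ∀ a b : ℝ, (X^2 - C (a+b) * X + C (a*b) : ℝ[X]) = (X - C a) * (X - C b) := by
      intro a b
      rw [C_add, C_mul]
      ring
    have hfac : (X^2 - C (2*α+α*1+α*(n₂:ℝ)+(2*α-1)) * X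
        + C (2*α^2*(n₂:ℝ)+3*α*1-1+(3*α-1)*(2*α-1)) : ℝ[X])
        = (X - C (2*α)) * (X - C (α*(3+(n₂:ℝ))-1)) := by
      rw [show (2*α+α*1+α*(n₂:ℝ)+(2*α-1)) = (2*α) + (α*(3+(n₂:ℝ))-1) by ring,
        show (2*α^2*(n₂:ℝ)+3*α*1-1+(3*α-1)*(2*α-1)) = (2*α) * (α*(3+(n₂:ℝ))-1) by ring,
        hgen]
    rw [hfac] at hcore
    -- normalize C-arguments in hcore to match the statement
    have hg1 : ∀ i : Fin n₂, (X - C (α*2 + μ₂ i) : ℝ[X]) = X - C (2*α + μ₂ i) := by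
      intro i
      rw [show α*2 + μ₂ i = 2*α + μ₂ i by ring]
    have hg2 : (X - C (α*2+(r₂:ℝ)) : ℝ[X]) = X - C (2*α+(r₂:ℝ)) := by
      rw [show α*2 + (r₂:ℝ) = 2*α + (r₂:ℝ) by ring]
    have hg3 : (X^2 - C (2*α+α*1+α*(n₂:ℝ)+1) * X
        + C (2*α^2*(n₂:ℝ)+3*α*1-1+(3*α-1)*1) : ℝ[X])
        = X^2 - C (3*α+α*(n₂:ℝ)+1) * X + C (2*α^2*(n₂:ℝ)+6*α-2) := by
      rw [show 2*α+α*1+α*(n₂:ℝ)+1 = 3*α+α*(n₂:ℝ)+1 by ring,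
        show 2*α^2*(n₂:ℝ)+3*α*1-1+(3*α-1)*1 = 2*α^2*(n₂:ℝ)+6*α-2 by ring]
    have hg4 : (X^2 - C (2*α+α*1+α*(n₂:ℝ)+1) * X
        + C (2*α^2*(n₂:ℝ)+6*α*1-2*1) : ℝ[X])
        = X^2 - C (3*α+α*(n₂:ℝ)+1) * X + C (2*α^2*(n₂:ℝ)+6*α-2) := by
      rw [show 2*α+α*1+α*(n₂:ℝ)+1 = 3*α+α*(n₂:ℝ)+1 by ring,
        show 2*α^2*(n₂:ℝ)+6*α*1-2*1 = 2*α^2*(n₂:ℝ)+6*α-2 by ring]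
    rw [Finset.prod_congr rfl fun i _ => hg1 i] at hcore
    rw [hg2] at hcore
    rw [hg3] at hcore
    rw [hg4] at hcore
    have hpre_ne : ((X - C (2*α))^2 * (X - C (2*α+(r₂:ℝ)))
        * (X^2 - C (3*α+α*(n₂:ℝ)+1) * X + C (2*α^2*(n₂:ℝ)+6*α-2)) : ℝ[X]) ≠ 0 :=
      mul_ne_zero (mul_ne_zero (pow_ne_zero _ (Polynomial.X_sub_C_ne_zero _))
        (Polynomial.X_sub_C_ne_zero _)) (quad_ne_zero _ _)
    refine mul_left_cancel₀ hpre_ne ?_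
    linear_combination hcore
  · -- case 2 ≤ r₁
    intro hr2
    have hmn : n₁ ≤ m₁ := by
      have h1 : n₁ * 2 ≤ n₁ * r₁ := Nat.mul_le_mul_left n₁ hr2
      omega
    have hsplit₁ : (∏ i, (X^2 - C (2*α+α*(r₁:ℝ)+α*(n₂:ℝ)+μ₁ i) * X
        + C (2*α^2*(n₂:ℝ)+3*α*(r₁:ℝ)-(r₁:ℝ)+(3*α-1)*μ₁ i)) : ℝ[X])
        = (X^2 - C (2*α+α*(r₁:ℝ)+α*(n₂:ℝ)+(r₁:ℝ)) * X
            + C (2*α^2*(n₂:ℝ)+3*α*(r₁:ℝ)-(r₁:ℝ)+(3*α-1)*(r₁:ℝ)))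
          * ∏ i ∈ Finset.univ.filter (fun i : Fin n₁ => i.val ≠ 0),
            (X^2 - C (2*α+α*(r₁:ℝ)+α*(n₂:ℝ)+μ₁ i) * X
              + C (2*α^2*(n₂:ℝ)+3*α*(r₁:ℝ)-(r₁:ℝ)+(3*α-1)*μ₁ i)) := by
      rw [prod_split hn₁ (fun i => (X^2 - C (2*α+α*(r₁:ℝ)+α*(n₂:ℝ)+μ₁ i) * X
        + C (2*α^2*(n₂:ℝ)+3*α*(r₁:ℝ)-(r₁:ℝ)+(3*α-1)*μ₁ i)) : Fin n₁ → ℝ[X]), hμ₁0]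
    rw [hsplit₂, hsplit₁, show m₁ = (m₁ - n₁) + n₁ from (Nat.sub_add_cancel hmn).symm,
      pow_add] at hcore
    have hpre_ne : ((X - C (2*α))^n₁ * (X - C (α*(n₁:ℝ)+(r₂:ℝ)))
        * (X^2 - C (2*α+α*(r₁:ℝ)+α*(n₂:ℝ)+(r₁:ℝ)) * X
          + C (2*α^2*(n₂:ℝ)+3*α*(r₁:ℝ)-(r₁:ℝ)+(3*α-1)*(r₁:ℝ))) : ℝ[X]) ≠ 0 :=
      mul_ne_zero (mul_ne_zero (pow_ne_zero _ (Polynomial.X_sub_C_ne_zero _))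
        (Polynomial.X_sub_C_ne_zero _)) (quad_ne_zero _ _)
    refine mul_left_cancel₀ hpre_ne ?_
    linear_combination hcore
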